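/- Let n ≥ 1 be an integer, let k > 0 and ε be real numbers with k + ε > 0, and let a₀ be a real number. Suppose f : ℝ → ℝ has Hilbert-series Laurent coefficients (a₀, a₀) of order n at s = 0. Define g(s) = f(s)·(1 − e^{−k s})/(1 − e^{−(k+ε) s}) for s > 0. Then g has Hilbert-series Laurent coefficients (a₀·k/(k+ε), a₀·k·(ε+2)/(2(k+ε))) of order n at s = 0. -/

import Mathlib

/-- `f` has Hilbert-series Laurent coefficients `(a₀, a₁)` of order `n` at `s = 0`:
`sⁿ·f(s) → a₀` and `sⁿ⁻¹·(f(s) − a₀/sⁿ) → a₁` as `s → 0⁺`. -/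
def HSLaurentCoeffs (f : ℝ → ℝ) (n : ℕ) (a₀ a₁ : ℝ) : Prop :=
  Filter.Tendsto (fun s => s ^ n * f s) (nhdsWithin 0 (Set.Ioi 0)) (nhds a₀) ∧
  Filter.Tendsto (fun s => s ^ (n - 1) * (f s - a₀ / s ^ n))
    (nhdsWithin 0 (Set.Ioi 0)) (nhds a₁)

open Filter Real Set

lemma base_sq : Tendsto (fun x : ℝ => (Real.exp x - 1 - x) / x ^ 2)
    (nhdsWithin 0 {0}ᶜ) (nhds (1/2)) := by
  rw [← tendsto_sub_nhds_zero_iff]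
  have hb : Tendsto (fun x : ℝ => |x| * (2/9)) (nhdsWithin 0 {0}ᶜ) (nhds 0) := by
    have : Tendsto (fun x : ℝ => |x| * (2/9)) (nhds 0) (nhds (|(0:ℝ)| * (2/9))) :=
      (continuous_abs.tendsto 0).mul_const _
    simpa using this.mono_left nhdsWithin_le_nhds
  refine squeeze_zero_norm' ?_ hb
  have h1 : ∀ᶠ x : ℝ in nhdsWithin 0 {0}ᶜ, |x| ≤ 1 := by
    filter_upwards [(eventually_abs_sub_lt 0 one_pos).filter_mono nhdsWithin_le_nhds] with x hx
    simpa using hx.le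
  filter_upwards [h1, self_mem_nhdsWithin] with x hx (hx0 : x ≠ 0)
  have hbound := Real.exp_bound hx (n := 3) (by norm_num)
  have hsum : (∑ m ∈ Finset.range 3, x ^ m / m.factorial) = 1 + x + x^2/2 := by
    simp [Finset.sum_range_succ]
  rw [hsum] at hbound
  have hbound' : |Real.exp x - (1 + x + x^2/2)| ≤ |x|^3 * (2/9) :=
    hbound.trans_eq (by norm_num [Nat.factorial])
  have hx2 : x^2 ≠ 0 := pow_ne_zero _ hx0
  have key : (Real.exp x - 1 - x) / x ^ 2 - 1/2 = (Real.exp x - (1 + x + x^2/2)) / x^2 := by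
    field_simp; ring
  rw [Real.norm_eq_abs, key, abs_div, abs_pow]
  have hxa : (0:ℝ) < |x|^2 := by positivity
  calc |Real.exp x - (1 + x + x^2/2)| / |x|^2 ≤ |x|^3 * (2/9) / |x|^2 :=
        (div_le_div_iff_of_pos_right hxa).mpr hbound'
    _ = |x| * (2/9) := by
        rw [show |x|^3 = |x| * |x|^2 by ring, mul_right_comm, mul_div_assoc,
          div_self hxa.ne', mul_one]

lemma lim_lin (c : ℝ) : Tendsto (fun s : ℝ => (1 - Real.exp (-(c*s)))/s)
    (nhdsWithin 0 (Set.Ioi 0)) (nhds c) := by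
  have h1 : HasDerivAt (fun s : ℝ => 1 - Real.exp (-(c*s))) c 0 := by
    have : HasDerivAt (fun s : ℝ => -(c*s)) (-c) 0 := by
      simpa using (hasDerivAt_id (0:ℝ)).const_mul (-c)
    have h2 := (Real.hasDerivAt_exp (-(c*0))).comp 0 this
    simpa using (h2.const_sub 1)
  have := hasDerivAt_iff_tendsto_slope.mp h1
  have h3 := this.mono_left (nhdsWithin_mono 0 (fun x hx => by simpa using (ne_of_gt hx : x ≠ 0)))
  refine h3.congr' ?_
  filter_upwards [self_mem_nhdsWithin] with s (hs : 0 < s)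
  simp [slope_def_field, div_eq_inv_mul]

lemma lim_quad (c : ℝ) (hc : c ≠ 0) :
    Tendsto (fun s : ℝ => (Real.exp (-(c*s)) - 1 + c*s)/s^2)
      (nhdsWithin 0 (Set.Ioi 0)) (nhds (c^2/2)) := by
  have hm : Tendsto (fun s : ℝ => -(c*s)) (nhdsWithin 0 (Set.Ioi 0)) (nhdsWithin 0 {0}ᶜ) := by
    rw [tendsto_nhdsWithin_iff]
    constructor
    · have : Tendsto (fun s : ℝ => -(c*s)) (nhds 0) (nhds (-(c*0))) :=
        (continuous_const.mul continuous_id).neg.tendsto 0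
      simpa using this.mono_left nhdsWithin_le_nhds
    · filter_upwards [self_mem_nhdsWithin] with s (hs : 0 < s)
      simp [hc, hs.ne']
  have h := (base_sq.comp hm).const_mul (c^2)
  have : c^2 * (1/2) = c^2/2 := by ring
  rw [this] at h
  refine h.congr' ?_
  filter_upwards [self_mem_nhdsWithin] with s (hs : 0 < s)
  have hs0 : s ≠ 0 := hs.ne'
  simp only [Function.comp]
  rw [show (-(c*s))^2 = c^2 * s^2 by ring]
  field_simp
  ring

/-- Multiplying a Hilbert series with equal Laurent coefficients `(a₀, a₀)` by
`(1 − e^{−ks})/(1 − e^{−(k+ε)s})` yields Laurent coefficients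
`(a₀k/(k+ε), a₀k(ε+2)/(2(k+ε)))`. -/
theorem hs_coeffs_of_single_test_symmetry
    (n : ℕ) (hn : 1 ≤ n) (k ε a₀ : ℝ) (hk : 0 < k) (hkε : 0 < k + ε)
    (f : ℝ → ℝ) (hf : HSLaurentCoeffs f n a₀ a₀) :
    HSLaurentCoeffs
      (fun s => f s * (1 - Real.exp (-(k * s))) / (1 - Real.exp (-((k + ε) * s))))
      n (a₀ * k / (k + ε)) (a₀ * k * (ε + 2) / (2 * (k + ε))) := by
  obtain ⟨m, rfl⟩ : ∃ m, n = m + 1 := ⟨n - 1, (Nat.succ_pred_eq_of_pos hn).symm⟩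
  obtain ⟨hf0, hf1⟩ := hf
  set d := k + ε with hd
  have hd0 : d ≠ 0 := hkε.ne'
  have hkn : k ≠ 0 := hk.ne'
  -- basic facts eventually
  have hpos : ∀ᶠ s in nhdsWithin (0:ℝ) (Set.Ioi 0), 0 < s := self_mem_nhdsWithin
  have hBpos : ∀ s : ℝ, 0 < s → 0 < 1 - Real.exp (-(d*s)) := by
    intro s hs
    have : -(d*s) < 0 := by nlinarith
    linarith [Real.exp_lt_one_iff.mpr this]
  have hA := lim_lin k
  have hB := lim_lin d
  have hr : Tendsto (fun s : ℝ =>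
      ((1 - Real.exp (-(k*s)))/s) / ((1 - Real.exp (-(d*s)))/s))
      (nhdsWithin 0 (Set.Ioi 0)) (nhds (k/d)) := hA.div hB hd0
  constructor
  · have h := hf0.mul hr
    rw [show a₀ * (k/d) = a₀ * k / d by ring] at h
    refine h.congr' ?_
    filter_upwards [hpos] with s hs
    have hs0 : s ≠ 0 := hs.ne'
    have hB0 : 1 - Real.exp (-(d*s)) ≠ 0 := (hBpos s hs).ne'
    field_simp
  · simp only [Nat.add_sub_cancel] at hf1 ⊢
    have hEk := lim_quad k hkn
    have hEd := lim_quad d hd0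
    have hN := ((hEk.const_mul (-d)).add (hEd.const_mul k))
    have hDen : Tendsto (fun s : ℝ => d * ((1 - Real.exp (-(d*s)))/s))
        (nhdsWithin 0 (Set.Ioi 0)) (nhds (d*d)) := hB.const_mul d
    have hW := hN.div hDen (by positivity : (d*d) ≠ 0)
    have total := (hr.mul hf1).add (hW.const_mul a₀)
    have hval : k/d * a₀ + a₀ * ((-d * (k^2/2) + k * (d^2/2)) / (d*d))
        = a₀ * k * (ε + 2) / (2 * (k + ε)) := by
      rw [← hd]
      field_simp
      ring
    rw [hval] at total
    refine total.congr' ?_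
    filter_upwards [hpos] with s hs
    have hs0 : s ≠ 0 := hs.ne'
    have hB0 : 1 - Real.exp (-(d*s)) ≠ 0 := (hBpos s hs).ne'
    show ((1 - Real.exp (-(k*s)))/s) / ((1 - Real.exp (-(d*s)))/s)
          * (s ^ m * (f s - a₀ / s ^ (m+1)))
        + a₀ * ((-d * ((Real.exp (-(k*s)) - 1 + k*s)/s^2)
            + k * ((Real.exp (-(d*s)) - 1 + d*s)/s^2))
          / (d * ((1 - Real.exp (-(d*s)))/s)))
       = s ^ m * (f s * (1 - Real.exp (-(k * s))) / (1 - Real.exp (-((k + ε) * s)))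
          - a₀ * k / d / s ^ (m+1))
    rw [← hd]
    have hB0' : 1 - Real.exp (-(s*d)) ≠ 0 := by rwa [mul_comm]
    field_simp
    ring_nf
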